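/- Let (X,d) be a compact metric space and f : X → X an arbitrary self-map. Then X contains a nonempty f-invariant chain-transitive subset, i.e., a nonempty set S with f(S) ⊆ S such that x 𝒞 y for all x, y ∈ S. -/
import Mathlib


open Filter Topology Set

variable {X : Type*}

section Defs
variable [PseudoMetricSpace X]

def IsEpsChain (f : X → X) (ε : ℝ) (n : ℕ) (c : ℕ → X) (x y : X) : Prop :=
  1 ≤ n ∧ c 0 = x ∧ c n = y ∧ ∀ i < n, dist (f (c i)) (c (i + 1)) < ε

def EpsChain (f : X → X) (ε : ℝ) (x y : X) : Prop :=
  ∃ n c, IsEpsChain f ε n c x y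

/-- The chain relation `x 𝒞 y`. -/
def ChainRel (f : X → X) (x y : X) : Prop :=
  ∀ ε > 0, EpsChain f ε x y

def EpsChainIn (f : X → X) (S : Set X) (ε : ℝ) (x y : X) : Prop :=
  ∃ n c, IsEpsChain f ε n c x y ∧ ∀ i ≤ n, c i ∈ S

def ChainRelIn (f : X → X) (S : Set X) (x y : X) : Prop :=
  ∀ ε > 0, EpsChainIn f S ε x y

def InternallyChainTransitive (f : X → X) (S : Set X) : Prop :=
  ∀ x ∈ S, ∀ y ∈ S, ∀ ε > 0, EpsChainIn f S ε x y

/-- The nested-chain relation `x 𝒞⊆ y`. -/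
def NestedChainRel (f : X → X) (x y : X) : Prop :=
  ∃ ε : ℕ → ℝ, (∀ n, 0 < ε n) ∧ Antitone ε ∧ Tendsto ε atTop (𝓝 0) ∧
    ∃ N : ℕ → ℕ, ∃ c : ℕ → ℕ → X,
      (∀ n, IsEpsChain f (ε n) (N n) (c n) x y) ∧
      ∀ n, c n '' Set.Iic (N n) ⊆ c (n + 1) '' Set.Iic (N (n + 1))

/-- The nested-chain relation with all chain points inside `S`. -/
def NestedChainRelIn (f : X → X) (S : Set X) (x y : X) : Prop :=
  ∃ ε : ℕ → ℝ, (∀ n, 0 < ε n) ∧ Antitone ε ∧ Tendsto ε atTop (𝓝 0) ∧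
    ∃ N : ℕ → ℕ, ∃ c : ℕ → ℕ → X,
      (∀ n, IsEpsChain f (ε n) (N n) (c n) x y ∧ ∀ i ≤ N n, c n i ∈ S) ∧
      ∀ n, c n '' Set.Iic (N n) ⊆ c (n + 1) '' Set.Iic (N (n + 1))

end Defs

/-- Strong `(ε,d)`-chain for an explicitly given distance function `d`. -/
def StrongEpsChainWith (d : X → X → ℝ) (f : X → X) (ε : ℝ) (x y : X) : Prop :=
  ∃ n, 1 ≤ n ∧ ∃ c : ℕ → X, c 0 = x ∧ c n = y ∧
    (∑ i ∈ Finset.range n, d (f (c i)) (c (i + 1))) < ε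

/-- The strong chain relation `x 𝒮𝒞_d y`. -/
def StrongChainRelWith (d : X → X → ℝ) (f : X → X) (x y : X) : Prop :=
  ∀ ε > 0, StrongEpsChainWith d f ε x y

section Aux
variable [PseudoMetricSpace X]

lemma epsChain_trans {f : X → X} {ε : ℝ} {x y z : X}
    (h1 : EpsChain f ε x y) (h2 : EpsChain f ε y z) : EpsChain f ε x z := by
  obtain ⟨n, c, hn, hc0, hcn, hstep⟩ := h1
  obtain ⟨m, d, hm, hd0, hdm, hdstep⟩ := h2
  refine ⟨n + m, fun i => if i ≤ n then c i else d (i - n), by omega, ?_, ?_, ?_⟩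
  · simp [hc0]
  · beta_reduce
    rw [if_neg (by omega)]
    simpa using hdm
  · intro i hi
    beta_reduce
    by_cases h : i + 1 ≤ n
    · simp only [if_pos (by omega : i ≤ n), if_pos h]
      exact hstep i (by omega)
    · simp only [if_neg h]
      by_cases h' : i ≤ n
      · have hin : i = n := by omega
        subst hin
        rw [if_pos le_rfl, (by omega : i + 1 - i = 1), hcn, ← hd0]
        exact hdstep 0 (by omega)
      · rw [if_neg h', (by omega : i + 1 - n = (i - n) + 1)]
        exact hdstep (i - n) (by omega)

lemma chainRel_trans {f : X → X} {x y z : X}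
    (h1 : ChainRel f x y) (h2 : ChainRel f y z) : ChainRel f x z :=
  fun ε hε => epsChain_trans (h1 ε hε) (h2 ε hε)

lemma chainRel_apply (f : X → X) (x : X) : ChainRel f x (f x) := by
  intro ε hε
  refine ⟨1, fun i => if i = 0 then x else f x, le_refl 1, by simp, by simp, ?_⟩
  intro i hi
  have : i = 0 := by omega
  subst this
  simpa using hε

/-- The set of points chain-reachable from `x`. -/
def Rset (f : X → X) (x : X) : Set X := {y | ChainRel f x y}

lemma Rset_nonempty (f : X → X) (x : X) : (Rset f x).Nonempty :=
  ⟨f x, chainRel_apply f x⟩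

lemma Rset_subset {f : X → X} {x y : X} (h : y ∈ Rset f x) : Rset f y ⊆ Rset f x :=
  fun _ hz => chainRel_trans h hz

lemma isClosed_Rset (f : X → X) (x : X) : IsClosed (Rset f x) := by
  rw [← closure_subset_iff_isClosed]
  intro y hy ε hε
  obtain ⟨y', hy', hd⟩ := Metric.mem_closure_iff.mp hy (ε / 2) (by positivity)
  obtain ⟨n, c, hn, hc0, hcn, hstep⟩ := hy' (ε / 2) (by positivity)
  refine ⟨n, fun i => if i = n then y else c i, hn, ?_, by simp, ?_⟩
  · beta_reduce
    rw [if_neg (by omega)]; exact hc0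
  · intro i hi
    beta_reduce
    rw [if_neg (by omega)]
    by_cases h : i + 1 = n
    · rw [if_pos h]
      calc dist (f (c i)) y ≤ dist (f (c i)) (c (i + 1)) + dist (c (i + 1)) y :=
            dist_triangle _ _ _
        _ < ε / 2 + ε / 2 := by
            refine add_lt_add (hstep i hi) ?_
            rw [h, hcn, dist_comm]; exact hd
        _ = ε := by ring
    · rw [if_neg h]
      exact lt_of_lt_of_le (hstep i hi) (by linarith)

end Aux

theorem stmt4 [MetricSpace X] [CompactSpace X] [Nonempty X] (f : X → X) :
    ∃ S : Set X, S.Nonempty ∧ Set.MapsTo f S S ∧ ∀ x ∈ S, ∀ y ∈ S, ChainRel f x y := by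
  classical
  set A : Set (Set X) := Set.range (Rset f) with hA
  have hzorn : ∃ m, m ⊆ Rset f (Classical.arbitrary X) ∧ Minimal (· ∈ A) m := by
    refine zorn_superset_nonempty A ?_ _ ⟨Classical.arbitrary X, rfl⟩
    intro c hcA hchain hcne
    have : Nonempty c := hcne.to_subtype
    have hint : (⋂₀ c).Nonempty := by
      refine IsCompact.nonempty_sInter_of_directed_nonempty_isCompact_isClosed
        ?_ ?_ ?_ ?_
      · intro s hs t ht
        rcases hchain.total hs ht with h | h
        · exact ⟨s, hs, Set.Subset.refl s, h⟩
        · exact ⟨t, ht, h, Set.Subset.refl t⟩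
      · intro U hU; obtain ⟨u, rfl⟩ := hcA hU; exact Rset_nonempty f u
      · intro U hU; obtain ⟨u, rfl⟩ := hcA hU; exact (isClosed_Rset f u).isCompact
      · intro U hU; obtain ⟨u, rfl⟩ := hcA hU; exact isClosed_Rset f u
    obtain ⟨z, hz⟩ := hint
    refine ⟨Rset f z, ⟨z, rfl⟩, ?_⟩
    intro s hs
    obtain ⟨u, rfl⟩ := hcA hs
    exact Rset_subset (hz _ hs)
  obtain ⟨m, -, hmem, hmin⟩ := hzorn
  obtain ⟨x, rfl⟩ := hmem
  have key : ∀ y ∈ Rset f x, Rset f y = Rset f x := by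
    intro y hy
    exact le_antisymm (Rset_subset hy) (hmin ⟨y, rfl⟩ (Rset_subset hy))
  refine ⟨Rset f x, Rset_nonempty f x, ?_, ?_⟩
  · intro y hy
    exact chainRel_trans hy (chainRel_apply f y)
  · intro y hy z hz
    rw [← key y hy] at hz
    exact hz
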